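/- Let θ ∈ ℝ satisfy e·|θ| ≤ 1/2 (e being Euler's number), and let a, k, m₁, m₂ ∈ ℕ satisfy a ≥ 1, k ≥ a, 2m₁ ≤ a and 2m₂ ≤ a. Then (|θ|^k / k!) · √(∏_{i=1}^{k} (m₁+i)(m₂+i)) ≤ (3/4)^k. -/

import Mathlib

/-- If `e·|θ| ≤ 1/2`, `a ≥ 1`, `k ≥ a`, `2m₁ ≤ a`, `2m₂ ≤ a`, then
`(|θ|^k / k!)·√(∏_{i=1}^k (m₁+i)(m₂+i)) ≤ (3/4)^k`. -/
theorem stmt_15 (θ : ℝ) (hθ : Real.exp 1 * |θ| ≤ 1 / 2)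
    (a k m₁ m₂ : ℕ) (ha : 1 ≤ a) (hk : a ≤ k) (h₁ : 2 * m₁ ≤ a) (h₂ : 2 * m₂ ≤ a) :
    |θ| ^ k / (Nat.factorial k : ℝ) *
        Real.sqrt (∏ i ∈ Finset.Icc 1 k, (((m₁ + i) * (m₂ + i) : ℕ) : ℝ)) ≤
      (3 / 4 : ℝ) ^ k := by
  have he : (0:ℝ) < Real.exp 1 := Real.exp_pos 1
  have hθ' : |θ| ≤ 1 / (2 * Real.exp 1) := by
    rw [le_div_iff₀ (by positivity)]
    nlinarith [abs_nonneg θ]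
  -- each factor bounded by (3k/2)^2
  have hP : (∏ i ∈ Finset.Icc 1 k, (((m₁ + i) * (m₂ + i) : ℕ) : ℝ)) ≤
      ((3 * k / 2 : ℝ) ^ 2) ^ k := by
    calc (∏ i ∈ Finset.Icc 1 k, (((m₁ + i) * (m₂ + i) : ℕ) : ℝ))
        ≤ ∏ i ∈ Finset.Icc 1 k, (3 * k / 2 : ℝ) ^ 2 := by
          apply Finset.prod_le_prod
          · intro i _; positivity
          · intro i hi
            simp only [Finset.mem_Icc] at hi
            have h1 : (m₁ : ℝ) + i ≤ 3 * k / 2 := by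
              have : (2:ℝ) * m₁ ≤ a := by exact_mod_cast h₁
              have : (a:ℝ) ≤ k := by exact_mod_cast hk
              have : (i:ℝ) ≤ k := by exact_mod_cast hi.2
              have : (2:ℝ) * m₁ ≤ k := by
                have := h₁.trans hk; exact_mod_cast this
              linarith
            have h2 : (m₂ : ℝ) + i ≤ 3 * k / 2 := by
              have : (i:ℝ) ≤ k := by exact_mod_cast hi.2
              have : (2:ℝ) * m₂ ≤ k := by
                have := h₂.trans hk; exact_mod_cast this
              linarith
            push_cast
            nlinarith [Nat.cast_nonneg (α := ℝ) m₁, Nat.cast_nonneg (α := ℝ) m₂,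
              Nat.cast_nonneg (α := ℝ) i]
      _ = ((3 * k / 2 : ℝ) ^ 2) ^ k := by
          rw [Finset.prod_const, Nat.card_Icc]; norm_num
  have hsqrt : Real.sqrt (∏ i ∈ Finset.Icc 1 k, (((m₁ + i) * (m₂ + i) : ℕ) : ℝ)) ≤
      (3 * k / 2 : ℝ) ^ k := by
    have := Real.sqrt_le_sqrt hP
    rwa [← pow_mul, mul_comm 2 k, pow_mul, Real.sqrt_sq (by positivity)] at this
  have hfac : (0:ℝ) < (Nat.factorial k : ℝ) := by exact_mod_cast Nat.factorial_pos k
  have hkk : (k:ℝ) ^ k / (Nat.factorial k : ℝ) ≤ Real.exp 1 ^ k := by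
    have := Real.pow_div_factorial_le_exp (x := (k:ℝ)) (Nat.cast_nonneg k) k
    calc (k:ℝ) ^ k / (Nat.factorial k : ℝ) ≤ Real.exp k := this
      _ = Real.exp 1 ^ k := by rw [← Real.exp_nat_mul]; norm_num
  calc |θ| ^ k / (Nat.factorial k : ℝ) *
        Real.sqrt (∏ i ∈ Finset.Icc 1 k, (((m₁ + i) * (m₂ + i) : ℕ) : ℝ))
      ≤ |θ| ^ k / (Nat.factorial k : ℝ) * (3 * k / 2 : ℝ) ^ k := by
        apply mul_le_mul_of_nonneg_left hsqrt (by positivity)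
    _ ≤ (1 / (2 * Real.exp 1)) ^ k / (Nat.factorial k : ℝ) * (3 * k / 2 : ℝ) ^ k := by
        gcongr
    _ ≤ (3 / 4 : ℝ) ^ k := by
        have key : (1 / (2 * Real.exp 1)) ^ k * (3 * k / 2 : ℝ) ^ k =
            (3/4:ℝ)^k * ((k:ℝ)^k / Real.exp 1 ^ k) := by
          rw [← mul_pow, mul_div_assoc, ← div_pow, ← mul_pow]
          congr 1
          field_simp
          ring_nf
        rw [div_mul_eq_mul_div, key, mul_div_assoc]
        have h2 : (k:ℝ)^k / Real.exp 1 ^ k / (Nat.factorial k : ℝ) ≤ 1 := by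
          rw [div_div, div_le_one (by positivity)]
          calc (k:ℝ)^k ≤ Real.exp 1 ^ k * (Nat.factorial k : ℝ) := by
                rw [← div_le_iff₀ hfac] at *; exact hkk
            _ = _ := rfl
        nlinarith [pow_nonneg (by norm_num : (0:ℝ) ≤ 3/4) k,
          pow_pos (mul_pos two_pos he) k]
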